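/- Let $\mathcal{P}$ be a non-empty finite set of odd primes and let $k \in \mathbb{N}$, $k > 1$, be a product of prime powers with primes from $\mathcal{P}$. Let $m$ be a power of $2$. Suppose that for each $p \in \mathcal{P}$ there exists a real number $c(p)$ with $1 < c(p) < p$, depending only on $p$, such that $s((\mathbb{Z}_p)^n) \leq c(p)^n (p-1) + 1$ for each $n \geq 1$. Then there exists a real number $c(k)$ with $1 < c(k) < k$, depending only on $k$, such that for every $n \geq 1$, $s((\mathbb{Z}_{mk})^n) \leq 2^n (m-1) k + c(k)^n (k-1) + 1$. -/

import Mathlib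

/-- The Erdős–Ginzburg–Ziv constant `s(A)`: the smallest `ℓ ∈ ℕ` such that every
multiset `S` over `A` of length `≥ ℓ` has a zero-sum sub-multiset of length `exp(A)`. -/
noncomputable def EGZ (A : Type) [AddCommGroup A] : ℕ :=
  sInf {ℓ : ℕ | ∀ S : Multiset A, ℓ ≤ Multiset.card S →
    ∃ T ≤ S, Multiset.card T = AddMonoid.exponent A ∧ T.sum = 0}

/-- `GoodSeq N n ℓ`: every multiset over `(ZMod N)^n` of length `≥ ℓ` has a zero-sum
sub-multiset of length exactly `N`. -/
def GoodSeq (N n ℓ : ℕ) : Prop :=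
  ∀ S : Multiset (Fin n → ZMod N), ℓ ≤ Multiset.card S →
    ∃ T ≤ S, Multiset.card T = N ∧ T.sum = 0

lemma exponent_pi_zmod (N n : ℕ) (hN : 0 < N) (hn : 1 ≤ n) :
    AddMonoid.exponent (Fin n → ZMod N) = N := by
  haveI : NeZero N := ⟨hN.ne'⟩
  refine Nat.dvd_antisymm ?_ ?_
  · refine AddMonoid.exponent_dvd_of_forall_nsmul_eq_zero fun x => ?_
    funext i
    show N • x i = 0
    rw [nsmul_eq_mul, ZMod.natCast_self, zero_mul]
  · have h := AddMonoid.exponent_nsmul_eq_zero (G := Fin n → ZMod N)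
      (fun _ => (1 : ZMod N))
    have h2 := congrFun h ⟨0, hn⟩
    simp only [Pi.smul_apply, Pi.zero_apply, smul_eq_mul, nsmul_eq_mul, mul_one] at h2
    exact (ZMod.natCast_eq_zero_iff _ _).1 h2

lemma goodSeq_pos {N n ℓ : ℕ} (hN : 0 < N) (h : GoodSeq N n ℓ) : 1 ≤ ℓ := by
  by_contra hl
  push_neg at hl
  interval_cases ℓ
  obtain ⟨T, hTle, hTcard, -⟩ := h 0 (by simp)
  rw [Multiset.le_zero.1 hTle] at hTcard
  simp at hTcard
  omega

/-- membership in the defining set of EGZ vs GoodSeq -/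
lemma mem_EGZ_set_iff (N n : ℕ) {ℓ : ℕ} (hN : 0 < N) (hn : 1 ≤ n) :
    (ℓ ∈ {ℓ : ℕ | ∀ S : Multiset (Fin n → ZMod N), ℓ ≤ Multiset.card S →
      ∃ T ≤ S, Multiset.card T = AddMonoid.exponent (Fin n → ZMod N) ∧ T.sum = 0}) ↔
    GoodSeq N n ℓ := by
  rw [Set.mem_setOf_eq, exponent_pi_zmod N n hN hn]
  rfl

/-- Trivial pigeonhole bound: some element appears `N` times. -/
lemma goodSeq_trivial (N n : ℕ) [NeZero N] :
    GoodSeq N n (N * Fintype.card (Fin n → ZMod N)) := by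
  have hN : 0 < N := Nat.pos_of_ne_zero (NeZero.ne N)
  intro S hS
  have hx : ∃ x, N ≤ S.count x := by
    by_contra hx
    push_neg at hx
    have h1 : Multiset.card S = ∑ a ∈ S.toFinset, S.count a :=
      (Multiset.toFinset_sum_count_eq S).symm
    have h2 : ∑ a ∈ S.toFinset, S.count a ≤ ∑ a ∈ S.toFinset, (N - 1) :=
      Finset.sum_le_sum fun a _ => by have := hx a; omega
    have h3 : S.toFinset.card ≤ Fintype.card (Fin n → ZMod N) := Finset.card_le_univ _
    simp only [Finset.sum_const, smul_eq_mul] at h2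
    have : Multiset.card S ≤ (N - 1) * Fintype.card (Fin n → ZMod N) := by
      calc Multiset.card S ≤ S.toFinset.card * (N - 1) := h1 ▸ h2
        _ ≤ (N - 1) * Fintype.card (Fin n → ZMod N) := by
          rw [mul_comm]; exact Nat.mul_le_mul_left _ h3
    have hcard : 0 < Fintype.card (Fin n → ZMod N) := Fintype.card_pos
    have hlt : (N - 1) * Fintype.card (Fin n → ZMod N) <
        N * Fintype.card (Fin n → ZMod N) :=
      (Nat.mul_lt_mul_right hcard).2 (by omega)
    omega
  obtain ⟨x, hx⟩ := hx
  refine ⟨Multiset.replicate N x, ?_, by simp, ?_⟩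
  · rw [Multiset.le_iff_count]
    intro a
    rw [Multiset.count_replicate]
    split <;> simp_all
  · rw [Multiset.sum_replicate]
    funext i
    show N • x i = 0
    rw [nsmul_eq_mul, ZMod.natCast_self, zero_mul]

/-- The EGZ set is nonempty, so `EGZ` itself is good. -/
lemma goodSeq_EGZ (N n : ℕ) (hN : 0 < N) (hn : 1 ≤ n) :
    GoodSeq N n (EGZ (Fin n → ZMod N)) := by
  rw [← mem_EGZ_set_iff N n hN hn]
  apply Nat.sInf_mem
  haveI : NeZero N := ⟨hN.ne'⟩
  exact ⟨N * Fintype.card (Fin n → ZMod N),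
    (mem_EGZ_set_iff N n hN hn).2 (goodSeq_trivial N n)⟩

lemma EGZ_le_of_goodSeq {N n ℓ : ℕ} (hN : 0 < N) (hn : 1 ≤ n) (h : GoodSeq N n ℓ) :
    EGZ (Fin n → ZMod N) ≤ ℓ :=
  Nat.sInf_le ((mem_EGZ_set_iff N n hN hn).2 h)
section Helpers

variable {α β : Type*} [DecidableEq α] [DecidableEq β]

lemma multiset_exists_of_le_map {f : α → β} {T' : Multiset β} :
    ∀ {S : Multiset α}, T' ≤ S.map f → ∃ T ≤ S, T.map f = T' := by
  induction T' using Multiset.induction_on with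
  | empty => exact fun _ => ⟨0, Multiset.zero_le _, rfl⟩
  | cons x T' ih =>
    intro S h
    have hx : x ∈ S.map f := Multiset.mem_of_le h (Multiset.mem_cons_self x T')
    obtain ⟨s, hs, rfl⟩ := Multiset.mem_map.1 hx
    have herase : (S.map f).erase (f s) = (S.erase s).map f := by
      conv_lhs => rw [← Multiset.cons_erase hs]
      rw [Multiset.map_cons, Multiset.erase_cons_head]
    have hT' : T' ≤ (S.erase s).map f := by
      rw [← herase, ← Multiset.erase_cons_head (f s) T']
      exact Multiset.erase_le_erase _ h
    obtain ⟨T, hTle, hTmap⟩ := ih hT'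
    refine ⟨s ::ₘ T, ?_, by rw [Multiset.map_cons, hTmap]⟩
    calc s ::ₘ T ≤ s ::ₘ S.erase s := Multiset.cons_le_cons _ hTle
      _ = S := Multiset.cons_erase hs

lemma multiset_sum_le_sum {s t : Multiset (Multiset α)} (h : s ≤ t) : s.sum ≤ t.sum := by
  obtain ⟨u, rfl⟩ := Multiset.le_iff_exists_add.1 h
  rw [Multiset.sum_add]
  exact le_add_of_nonneg_right (Multiset.zero_le _)

lemma zmod_dvd_of_cast_eq_zero {N d : ℕ} [NeZero N] (hd : d ∣ N) (x : ZMod N)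
    (h : ZMod.castHom hd (ZMod d) x = 0) : ∃ y : ZMod N, x = (d : ZMod N) * y := by
  have h1 : ((x.val : ℕ) : ZMod d) = 0 := by
    rwa [ZMod.natCast_val, ← ZMod.castHom_apply (h := hd)]
  obtain ⟨c, hc⟩ := (ZMod.natCast_eq_zero_iff _ _).1 h1
  refine ⟨(c : ZMod N), ?_⟩
  have : ((x.val : ℕ) : ZMod N) = x := by rw [ZMod.natCast_val, ZMod.cast_id]
  rw [← this, hc]
  push_cast
  ring

end Helpers
section Step

variable {n : ℕ}

lemma pi_multiset_sum_apply {M : Type*} [AddCommMonoid M] (S : Multiset (Fin n → M)) (i : Fin n) :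
    S.sum i = (S.map fun v => v i).sum := by
  induction S using Multiset.induction_on with
  | empty => simp
  | cons v S ih => simp [ih]

lemma multiset_sum_sum {M : Type*} [AddCommMonoid M] (C : Multiset (Multiset M)) :
    C.sum.sum = (C.map Multiset.sum).sum := by
  induction C using Multiset.induction_on with
  | empty => simp
  | cons T C ih => simp [ih]

lemma multiset_card_sum {M : Type*} (C : Multiset (Multiset M)) :
    Multiset.card C.sum = (C.map (fun T => Multiset.card T)).sum := by
  induction C using Multiset.induction_on with
  | empty => simp
  | cons T C ih => simp [ih]

/-- Greedy extraction of `t` disjoint blocks of length `a` whose projections mod `a` sum to 0. -/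
lemma extract_blocks (a b : ℕ) [NeZero a] [NeZero b] {ℓa : ℕ}
    (Ha : GoodSeq a n ℓa) :
    ∀ (t : ℕ) (S : Multiset (Fin n → ZMod (a * b))), a * t + ℓa ≤ Multiset.card S + a →
    ∃ B : Multiset (Multiset (Fin n → ZMod (a * b))), Multiset.card B = t ∧ B.sum ≤ S ∧
      ∀ T ∈ B, Multiset.card T = a ∧
        (T.map fun v i => ZMod.castHom (dvd_mul_right a b) (ZMod a) (v i)).sum = 0 := by
  intro t
  induction t with
  | zero => exact fun S _ => ⟨0, rfl, Multiset.zero_le _, by simp⟩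
  | succ t ih =>
    intro S hS
    set π : (Fin n → ZMod (a * b)) → (Fin n → ZMod a) :=
      fun v i => ZMod.castHom (dvd_mul_right a b) (ZMod a) (v i) with hπ
    have hmul : a * (t + 1) = a * t + a := by ring
    have hcard : ℓa ≤ Multiset.card (S.map π) := by
      rw [Multiset.card_map]
      omega
    obtain ⟨T', hT'le, hT'card, hT'sum⟩ := Ha (S.map π) hcard
    obtain ⟨T, hTle, hTmap⟩ := multiset_exists_of_le_map hT'le
    have hTcard : Multiset.card T = a := by
      have h1 : Multiset.card T' = Multiset.card T := by rw [← hTmap, Multiset.card_map]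
      omega
    have haS : a ≤ Multiset.card S := by
      have := Multiset.card_le_card hTle
      omega
    obtain ⟨B', hB'card, hB'le, hB'prop⟩ := ih (S - T) (by
      rw [Multiset.card_sub hTle, hTcard]
      omega)
    refine ⟨T ::ₘ B', by simp [hB'card], ?_, ?_⟩
    · rw [Multiset.sum_cons]
      calc T + B'.sum ≤ T + (S - T) := add_le_add_right hB'le T
        _ = S := add_tsub_cancel_of_le hTle
    · intro U hU
      rcases Multiset.mem_cons.1 hU with h | h
      · subst h; exact ⟨hTcard, hTmap ▸ hT'sum⟩
      · exact hB'prop U h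

/-- The key multiplicative step. -/
lemma goodSeq_step (a b : ℕ) [NeZero a] [NeZero b] {ℓa ℓb : ℕ}
    (Ha : GoodSeq a n ℓa) (Hb : GoodSeq b n ℓb) :
    GoodSeq (a * b) n (a * (ℓb - 1) + ℓa) := by
  classical
  haveI : NeZero (a * b) := ⟨Nat.mul_ne_zero (NeZero.ne a) (NeZero.ne b)⟩
  intro S hS
  have hℓb : 1 ≤ ℓb := goodSeq_pos (Nat.pos_of_ne_zero (NeZero.ne b)) Hb
  set π : (Fin n → ZMod (a * b)) → (Fin n → ZMod a) :=
    fun v i => ZMod.castHom (dvd_mul_right a b) (ZMod a) (v i) with hπ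
  obtain ⟨B, hBcard, hBle, hBprop⟩ := extract_blocks a b Ha ℓb S (by
    have : a * ℓb = a * (ℓb - 1) + a := by cases ℓb with
      | zero => omega
      | succ m => simp [Nat.mul_succ]
    omega)
  -- "division by a" of the block sums
  set f : Multiset (Fin n → ZMod (a * b)) → (Fin n → ZMod (a * b)) :=
    fun T i => if h : ∃ y : ZMod (a * b), T.sum i = (a : ZMod (a * b)) * y
      then h.choose else 0 with hf
  have hfspec : ∀ T ∈ B, ∀ i, T.sum i = (a : ZMod (a * b)) * f T i := by
    intro T hT i
    obtain ⟨-, hsum⟩ := hBprop T hT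
    have hcast : ZMod.castHom (dvd_mul_right a b) (ZMod a) (T.sum i) = 0 := by
      have this := (((ZMod.castHom (dvd_mul_right a b) (ZMod a)).toAddMonoidHom.comp
        (Pi.evalAddMonoidHom (fun _ : Fin n => ZMod (a * b)) i)).map_multiset_sum T)
      simp only [AddMonoidHom.coe_comp, RingHom.toAddMonoidHom_eq_coe,
        AddMonoidHom.coe_coe, Function.comp_apply, Pi.evalAddMonoidHom_apply] at this
      have h2 : (T.map fun v => ZMod.castHom (dvd_mul_right a b) (ZMod a) (v i)).sum
          = ZMod.castHom (dvd_mul_right a b) (ZMod a) (T.sum i) := this.symm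
      rw [← h2]
      have h3 := congrFun hsum i
      rw [pi_multiset_sum_apply] at h3
      rw [Multiset.map_map] at h3
      exact h3
    obtain ⟨y, hy⟩ := zmod_dvd_of_cast_eq_zero (dvd_mul_right a b) (T.sum i) hcast
    have hex : ∃ y : ZMod (a * b), T.sum i = (a : ZMod (a * b)) * y := ⟨y, hy⟩
    simp only [hf, dif_pos hex]
    exact hex.choose_spec
  set g : Multiset (Fin n → ZMod (a * b)) → (Fin n → ZMod b) :=
    fun T i => ZMod.castHom (dvd_mul_left b a) (ZMod b) (f T i) with hg
  obtain ⟨U, hUle, hUcard, hUsum⟩ := Hb (B.map g) (by rw [Multiset.card_map, hBcard])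
  obtain ⟨C, hCle, hCmap⟩ := multiset_exists_of_le_map hUle
  have hCcard : Multiset.card C = b := by
    have h1 : Multiset.card U = Multiset.card C := by rw [← hCmap, Multiset.card_map]
    omega
  refine ⟨C.sum, le_trans (multiset_sum_le_sum hCle) hBle, ?_, ?_⟩
  · rw [multiset_card_sum]
    have hconst : C.map (fun T => Multiset.card T) = C.map (fun _ => a) :=
      Multiset.map_congr rfl fun T hT => (hBprop T (Multiset.mem_of_le hCle hT)).1
    rw [hconst, Multiset.map_const', Multiset.sum_replicate, hCcard, smul_eq_mul, mul_comm]
  · funext i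
    rw [multiset_sum_sum, pi_multiset_sum_apply, Multiset.map_map]
    have hmap : C.map ((fun v => v i) ∘ Multiset.sum) = C.map (fun T => (a : ZMod (a * b)) * f T i) :=
      Multiset.map_congr rfl fun T hT => hfspec T (Multiset.mem_of_le hCle hT) i
    rw [hmap, Multiset.sum_map_mul_left]
    set w : ZMod (a * b) := (C.map fun T => f T i).sum with hw
    have hcastw : ZMod.castHom (dvd_mul_left b a) (ZMod b) w = 0 := by
      have := ((ZMod.castHom (dvd_mul_left b a) (ZMod b)).toAddMonoidHom.map_multiset_sum
        (C.map fun T => f T i))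
      simp only [RingHom.toAddMonoidHom_eq_coe, AddMonoidHom.coe_coe, Multiset.map_map,
        Function.comp] at this
      rw [hw, this]
      have : (C.map fun T => ZMod.castHom (dvd_mul_left b a) (ZMod b) (f T i)).sum
          = (C.map fun T => g T i).sum := rfl
      rw [this]
      have h4 : (C.map g).sum i = ((C.map g).map fun v => v i).sum :=
        pi_multiset_sum_apply _ i
      rw [Multiset.map_map] at h4
      have h5 : (C.map fun T => g T i).sum = (C.map g).sum i := h4.symm
      rw [h5, hCmap, hUsum, Pi.zero_apply]
    obtain ⟨z, hz⟩ := zmod_dvd_of_cast_eq_zero (dvd_mul_left b a) w hcastw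
    rw [hz, ← mul_assoc, ← Nat.cast_mul, ZMod.natCast_self, zero_mul, Pi.zero_apply]

end Step
section PowTwo

lemma goodSeq_one (n : ℕ) : GoodSeq 1 n 1 := by
  intro S hS
  have : 0 < Multiset.card S := hS
  obtain ⟨s, hs⟩ := Multiset.card_pos_iff_exists_mem.1 this
  exact ⟨{s}, Multiset.singleton_le.2 hs, by simp, by simp [Subsingleton.elim (s : Fin n → ZMod 1) 0]⟩

lemma goodSeq_two (n : ℕ) : GoodSeq 2 n (2 ^ n + 1) := by
  classical
  intro S hS
  have hx : ∃ x, 2 ≤ S.count x := by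
    by_contra hx
    push_neg at hx
    have h1 : Multiset.card S = ∑ a ∈ S.toFinset, S.count a :=
      (Multiset.toFinset_sum_count_eq S).symm
    have h2 : ∑ a ∈ S.toFinset, S.count a ≤ ∑ a ∈ S.toFinset, 1 :=
      Finset.sum_le_sum fun a _ => by have := hx a; omega
    have h3 : S.toFinset.card ≤ Fintype.card (Fin n → ZMod 2) := Finset.card_le_univ _
    have h4 : Fintype.card (Fin n → ZMod 2) = 2 ^ n := by
      rw [Fintype.card_fun]
      simp
    simp only [Finset.sum_const, smul_eq_mul, mul_one] at h2
    omega
  obtain ⟨x, hx⟩ := hx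
  refine ⟨Multiset.replicate 2 x, ?_, by simp, ?_⟩
  · rw [Multiset.le_iff_count]
    intro a
    rw [Multiset.count_replicate]
    split <;> simp_all
  · rw [Multiset.sum_replicate]
    funext i
    show (2 : ℕ) • x i = 0
    rw [nsmul_eq_mul, ZMod.natCast_self, zero_mul]

lemma goodSeq_pow_two (a n : ℕ) : GoodSeq (2 ^ a) n ((2 ^ a - 1) * 2 ^ n + 1) := by
  induction a with
  | zero => simpa using goodSeq_one n
  | succ a ih =>
    haveI : NeZero (2 ^ a) := ⟨pow_ne_zero a two_ne_zero⟩
    have step := goodSeq_step (n := n) 2 (2 ^ a) (goodSeq_two n) ih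
    have h1 : 2 * (2 ^ a) = 2 ^ (a + 1) := by ring
    have h2 : 2 * ((2 ^ a - 1) * 2 ^ n + 1 - 1) + (2 ^ n + 1)
        = (2 ^ (a + 1) - 1) * 2 ^ n + 1 := by
      have hpos : 1 ≤ 2 ^ a := Nat.one_le_two_pow
      have : 2 ^ (a + 1) = 2 * 2 ^ a := by ring
      rw [this]
      rw [Nat.add_sub_cancel]
      have e1 : (2 ^ a - 1) * 2 ^ n = 2 ^ a * 2 ^ n - 2 ^ n := by
        rw [Nat.sub_mul, one_mul]
      have e2 : (2 * 2 ^ a - 1) * 2 ^ n = 2 * (2 ^ a * 2 ^ n) - 2 ^ n := by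
        rw [Nat.sub_mul, one_mul, mul_assoc]
      have hge : 2 ^ n ≤ 2 ^ a * 2 ^ n := Nat.le_mul_of_pos_left _ (by omega)
      omega
    rw [h1, h2] at step
    exact step

end PowTwo

section KPart

lemma k_part (P : Finset ℕ)
    (hc : ∀ p ∈ P, ∃ c : ℝ, 1 < c ∧ c < p ∧ ∀ n : ℕ, 1 ≤ n →
      (EGZ (Fin n → ZMod p) : ℝ) ≤ c ^ n * ((p : ℝ) - 1) + 1) :
    ∀ k : ℕ, 1 < k → (∀ p : ℕ, p.Prime → p ∣ k → p ∈ P) →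
    ∃ ck : ℝ, 1 < ck ∧ ck < k ∧ ∀ n : ℕ, 1 ≤ n →
      ∃ ℓ : ℕ, GoodSeq k n ℓ ∧ (ℓ : ℝ) ≤ ck ^ n * ((k : ℝ) - 1) + 1 := by
  intro k
  induction k using Nat.strong_induction_on with
  | _ k IH =>
    intro hk1 hkP
    set p := k.minFac with hpdef
    have hp : p.Prime := Nat.minFac_prime (by omega)
    have hpdvd : p ∣ k := Nat.minFac_dvd k
    have hpP : p ∈ P := hkP p hp hpdvd
    obtain ⟨c, hc1, hcp, hcbound⟩ := hc p hpP
    set K := k / p with hKdef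
    have hkK : k = p * K := (Nat.mul_div_cancel' hpdvd).symm
    have hK1 : 1 ≤ K := by
      rcases Nat.eq_zero_or_pos K with h | h
      · rw [h, mul_zero] at hkK; omega
      · exact h
    rcases eq_or_lt_of_le hK1 with hK | hK2
    · -- K = 1, k = p prime
      have hkp : k = p := by rw [hkK, ← hK, mul_one]
      refine ⟨c, hc1, by rw [hkp]; exact hcp, fun n hn => ?_⟩
      refine ⟨EGZ (Fin n → ZMod k), goodSeq_EGZ k n (by omega) hn, ?_⟩
      rw [hkp]
      exact hcbound n hn
    · -- K ≥ 2
      have hKlt : K < k := by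
        have h2 : 2 * K ≤ p * K := Nat.mul_le_mul_right K hp.two_le
        omega
      obtain ⟨cK, hcK1, hcKK, hcKbound⟩ := IH K hKlt hK2 (fun q hq hqd =>
        hkP q hq (hqd.trans ⟨p, by rw [hkK]; ring⟩))
      refine ⟨max cK c, lt_max_iff.2 (Or.inl hcK1), ?_, ?_⟩
      · apply max_lt
        · calc cK < K := hcKK
            _ ≤ (k : ℝ) := by exact_mod_cast Nat.cast_le.2 hKlt.le
        · calc c < p := hcp
            _ ≤ (k : ℝ) := by exact_mod_cast Nat.cast_le.2 (Nat.le_of_dvd (by omega) hpdvd)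
      · intro n hn
        obtain ⟨ℓK, hGK, hℓK⟩ := hcKbound n hn
        set ℓp := EGZ (Fin n → ZMod p) with hℓpdef
        have hGp : GoodSeq p n ℓp := goodSeq_EGZ p n hp.pos hn
        have hℓp : (ℓp : ℝ) ≤ c ^ n * ((p : ℝ) - 1) + 1 := hcbound n hn
        haveI : NeZero p := ⟨hp.pos.ne'⟩
        haveI : NeZero K := ⟨by omega⟩
        have hstep := goodSeq_step (n := n) p K hGp hGK
        rw [← hkK] at hstep
        refine ⟨p * (ℓK - 1) + ℓp, hstep, ?_⟩
        have h1K : 1 ≤ ℓK := goodSeq_pos (by omega) hGK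
        have hcast : ((p * (ℓK - 1) + ℓp : ℕ) : ℝ) = p * ((ℓK : ℝ) - 1) + ℓp := by
          push_cast [Nat.cast_sub h1K]
          ring
        rw [hcast]
        set ck := max cK c with hckdef
        have h0cK : (0 : ℝ) ≤ cK := le_of_lt (lt_trans one_pos hcK1)
        have h0c : (0 : ℝ) ≤ c := le_of_lt (lt_trans one_pos hc1)
        have hcKn : cK ^ n ≤ ck ^ n := pow_le_pow_left₀ h0cK (le_max_left _ _) n
        have hcn : c ^ n ≤ ck ^ n := pow_le_pow_left₀ h0c (le_max_right _ _) n
        have hckn0 : (0 : ℝ) ≤ ck ^ n := pow_nonneg (le_trans h0cK (le_max_left _ _)) n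
        have hpR : (2 : ℝ) ≤ p := by exact_mod_cast hp.two_le
        have hKR : (1 : ℝ) ≤ K := by exact_mod_cast hK1
        have hkR : (k : ℝ) = p * K := by exact_mod_cast hkK
        have key : (p : ℝ) * ((ℓK : ℝ) - 1) + ℓp ≤ ck ^ n * ((k : ℝ) - 1) + 1 := by
          have e1 : (p : ℝ) * ((ℓK : ℝ) - 1) ≤ (p : ℝ) * (cK ^ n * ((K : ℝ) - 1)) := by
            apply mul_le_mul_of_nonneg_left _ (by linarith)
            linarith
          have e2 : (p : ℝ) * (cK ^ n * ((K : ℝ) - 1)) ≤ (p : ℝ) * (ck ^ n * ((K : ℝ) - 1)) := by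
            apply mul_le_mul_of_nonneg_left _ (by linarith)
            apply mul_le_mul_of_nonneg_right hcKn (by linarith)
          have e3 : c ^ n * ((p : ℝ) - 1) ≤ ck ^ n * ((p : ℝ) - 1) :=
            mul_le_mul_of_nonneg_right hcn (by linarith)
          have e4 : (p : ℝ) * (ck ^ n * ((K : ℝ) - 1)) + ck ^ n * ((p : ℝ) - 1)
              = ck ^ n * ((k : ℝ) - 1) := by rw [hkR]; ring
          linarith
        exact key

end KPart
theorem egz_composite_upper (P : Finset ℕ) (hP : P.Nonempty)
    (hPodd : ∀ p ∈ P, Nat.Prime p ∧ Odd p)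
    (k : ℕ) (hk1 : 1 < k) (hkP : ∀ p : ℕ, p.Prime → p ∣ k → p ∈ P)
    (m : ℕ) (hm : ∃ a : ℕ, m = 2 ^ a)
    (hc : ∀ p ∈ P, ∃ c : ℝ, 1 < c ∧ c < p ∧ ∀ n : ℕ, 1 ≤ n →
      (EGZ (Fin n → ZMod p) : ℝ) ≤ c ^ n * ((p : ℝ) - 1) + 1) :
    ∃ ck : ℝ, 1 < ck ∧ ck < k ∧ ∀ n : ℕ, 1 ≤ n →
      (EGZ (Fin n → ZMod (m * k)) : ℝ) ≤
        2 ^ n * ((m : ℝ) - 1) * k + ck ^ n * ((k : ℝ) - 1) + 1 := by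
  obtain ⟨ck, hck1, hckk, hbound⟩ := k_part P hc k hk1 hkP
  refine ⟨ck, hck1, hckk, fun n hn => ?_⟩
  obtain ⟨a, hma⟩ := hm
  have hm1 : 1 ≤ m := by rw [hma]; exact Nat.one_le_two_pow
  haveI : NeZero k := ⟨by omega⟩
  haveI : NeZero m := ⟨by omega⟩
  obtain ⟨ℓk, hGk, hℓk⟩ := hbound n hn
  have hGm : GoodSeq m n ((m - 1) * 2 ^ n + 1) := by rw [hma]; exact goodSeq_pow_two a n
  have hstep := goodSeq_step (n := n) k m hGk hGm
  rw [Nat.add_sub_cancel] at hstep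
  rw [show k * m = m * k from Nat.mul_comm k m] at hstep
  have hEGZ := EGZ_le_of_goodSeq (N := m * k) (n := n) (Nat.mul_pos (by omega) (by omega)) hn hstep
  have hcastle : (EGZ (Fin n → ZMod (m * k)) : ℝ) ≤ ((k * ((m - 1) * 2 ^ n) + ℓk : ℕ) : ℝ) :=
    Nat.cast_le.2 hEGZ
  refine le_trans hcastle ?_
  have hcast : ((k * ((m - 1) * 2 ^ n) + ℓk : ℕ) : ℝ)
      = (k : ℝ) * (((m : ℝ) - 1) * 2 ^ n) + (ℓk : ℝ) := by
    push_cast [Nat.cast_sub hm1]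
    ring
  rw [hcast]
  have e : (k : ℝ) * (((m : ℝ) - 1) * 2 ^ n) = 2 ^ n * ((m : ℝ) - 1) * k := by ring
  rw [e]
  linarith [hℓk]
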